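/- arXiv:cond-mat/0203166 — 2 statements merged into one kernel-verified Lean document; each statement's English description precedes it below -/
import Mathlib

section
/- Let X = αY + ε with α > 0, where Y and ε are independent with Student densities of the same tail index ν > 0: P_Y(y) = C_ν(1+y²/ν)^{−(ν+1)/2} and P_ε(e) = (C_ν/σ)(1+e²/(νσ²))^{−(ν+1)/2} with σ > 0. Then the upper tail dependence coefficient λ = lim_{u→1} P(X > F_X⁻¹(u) | Y > F_Y⁻¹(u)) equals 1/(1 + (σ/α)^ν). -/
open MeasureTheory ProbabilityTheory Filter Real Set Topology

set_option maxHeartbeats 1000000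

/-- The normalization constant `C_ν = Γ((ν+1)/2)/(Γ(ν/2)√(νπ))` of the Student density. -/
noncomputable def Cnu (ν : ℝ) : ℝ :=
  Real.Gamma ((ν + 1) / 2) / (Real.Gamma (ν / 2) * Real.sqrt (ν * Real.pi))

/-- The Student density with `ν` degrees of freedom and scale factor `σ`. -/
noncomputable def studentPdf (ν σ x : ℝ) : ℝ :=
  Cnu ν / σ * (1 + x ^ 2 / (ν * σ ^ 2)) ^ (-((ν + 1) / 2))

/-- The (left-continuous generalized inverse) quantile function of a CDF `F`. -/
noncomputable def quantile (F : ℝ → ℝ) (u : ℝ) : ℝ := sInf {x : ℝ | u ≤ F x}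

set_option linter.unusedSectionVars false
set_option linter.unusedVariables false



lemma Cnu_pos {ν : ℝ} (hν : 0 < ν) : 0 < Cnu ν := by
  apply div_pos (Real.Gamma_pos_of_pos (by linarith))
  exact mul_pos (Real.Gamma_pos_of_pos (by linarith))
    (Real.sqrt_pos.2 (mul_pos hν Real.pi_pos))

lemma studentPdf_nonneg {ν σ : ℝ} (hν : 0 < ν) (hσ : 0 < σ) (x : ℝ) :
    0 ≤ studentPdf ν σ x := by
  unfold studentPdf
  have h1 : (0:ℝ) < 1 + x ^ 2 / (ν * σ ^ 2) := by positivity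
  exact mul_nonneg (div_nonneg (Cnu_pos hν).le hσ.le) (Real.rpow_nonneg h1.le _)

lemma studentPdf_continuous {ν σ : ℝ} (hν : 0 < ν) (hσ : 0 < σ) :
    Continuous (studentPdf ν σ) := by
  unfold studentPdf
  apply Continuous.mul continuous_const
  apply Continuous.rpow_const
  · fun_prop
  · intro x
    left
    have : (0:ℝ) < 1 + x ^ 2 / (ν * σ ^ 2) := by positivity
    exact this.ne'

lemma sq_rpow_eq {t : ℝ} (ht : 0 ≤ t) (e : ℝ) : (t ^ 2) ^ e = t ^ (2 * e) := by
  rw [← Real.rpow_natCast t 2, ← Real.rpow_mul ht]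
  norm_num

/-- key exponent computation -/
lemma pow_div_eq {ν σ t : ℝ} (hν : 0 < ν) (hσ : 0 < σ) (ht : 0 < t) :
    (t ^ 2 / (ν * σ ^ 2)) ^ (-((ν + 1) / 2))
      = (ν * σ ^ 2) ^ ((ν + 1) / 2) * t ^ (-(ν + 1)) := by
  have hb0 : (0:ℝ) < ν * σ ^ 2 := by positivity
  rw [Real.div_rpow (sq_nonneg t) hb0.le, sq_rpow_eq ht.le,
    show 2 * (-((ν + 1) / 2)) = -(ν+1) by ring, Real.rpow_neg hb0.le, div_eq_mul_inv, inv_inv, mul_comm]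

lemma student_tail {ν σ : ℝ} (hν : 0 < ν) (hσ : 0 < σ) :
    Tendsto (fun y => y ^ ν *
      ((volume.withDensity fun x => ENNReal.ofReal (studentPdf ν σ x)) (Ioi y)).toReal)
      atTop (𝓝 (Cnu ν * ν ^ ((ν - 1) / 2) * σ ^ ν)) := by
  set C := Cnu ν with hC
  have hC0 : 0 < C := Cnu_pos hν
  set A : ℝ := Cnu ν * ν ^ ((ν - 1) / 2) * σ ^ ν with hA
  have hb0 : (0:ℝ) < ν * σ ^ 2 := by positivity
  have he : -(ν+1) < -1 := by linarith
  -- pointwise bounds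
  have hup : ∀ y : ℝ, 0 < y → ∀ t ∈ Ioi y, studentPdf ν σ t
      ≤ (C / σ * (ν * σ ^ 2) ^ ((ν + 1) / 2)) * t ^ (-(ν+1)) := by
    intro y hy t ht
    have ht0 : 0 < t := hy.trans ht
    have h1 : (0:ℝ) < t ^ 2 / (ν * σ ^ 2) := by positivity
    have h2 : (1 + t ^ 2 / (ν * σ ^ 2)) ^ (-((ν + 1) / 2))
        ≤ (t ^ 2 / (ν * σ ^ 2)) ^ (-((ν + 1) / 2)) :=
      Real.rpow_le_rpow_of_nonpos h1 (by linarith) (by linarith)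
    unfold studentPdf
    calc Cnu ν / σ * (1 + t ^ 2 / (ν * σ ^ 2)) ^ (-((ν + 1) / 2))
        ≤ Cnu ν / σ * (t ^ 2 / (ν * σ ^ 2)) ^ (-((ν + 1) / 2)) := by
          apply mul_le_mul_of_nonneg_left h2 (by positivity)
      _ = (C / σ * (ν * σ ^ 2) ^ ((ν + 1) / 2)) * t ^ (-(ν+1)) := by
          rw [pow_div_eq hν hσ ht0, ← hC]; ring
  have hlo : ∀ y : ℝ, 0 < y → ∀ t ∈ Ioi y,
      ((1 + ν * σ ^ 2 / y ^ 2) ^ (-((ν + 1) / 2)) * (C / σ * (ν * σ ^ 2) ^ ((ν + 1) / 2)))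
        * t ^ (-(ν+1)) ≤ studentPdf ν σ t := by
    intro y hy t ht
    have ht0 : 0 < t := hy.trans ht
    have hty : y ≤ t := le_of_lt ht
    have h1 : (0:ℝ) < 1 + t ^ 2 / (ν * σ ^ 2) := by positivity
    have hkey : 1 + t ^ 2 / (ν * σ ^ 2)
        ≤ (1 + ν * σ ^ 2 / y ^ 2) * (t ^ 2 / (ν * σ ^ 2)) := by
      have ht2 : 1 ≤ t ^ 2 / y ^ 2 := by
        rw [le_div_iff₀ (by positivity)]
        nlinarith
      have expand : (1 + ν * σ ^ 2 / y ^ 2) * (t ^ 2 / (ν * σ ^ 2))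
          = t ^ 2 / (ν * σ ^ 2) + t ^ 2 / y ^ 2 := by
        field_simp
      rw [expand]
      linarith
    have h2 : ((1 + ν * σ ^ 2 / y ^ 2) * (t ^ 2 / (ν * σ ^ 2))) ^ (-((ν + 1) / 2))
        ≤ (1 + t ^ 2 / (ν * σ ^ 2)) ^ (-((ν + 1) / 2)) :=
      Real.rpow_le_rpow_of_nonpos h1 hkey (by linarith)
    have h3 : ((1 + ν * σ ^ 2 / y ^ 2) * (t ^ 2 / (ν * σ ^ 2))) ^ (-((ν + 1) / 2))
        = (1 + ν * σ ^ 2 / y ^ 2) ^ (-((ν + 1) / 2)) * ((ν * σ ^ 2) ^ ((ν + 1) / 2) * t ^ (-(ν+1))) := by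
      rw [Real.mul_rpow (by positivity) (by positivity), pow_div_eq hν hσ ht0]
    unfold studentPdf
    calc ((1 + ν * σ ^ 2 / y ^ 2) ^ (-((ν + 1) / 2)) * (C / σ * (ν * σ ^ 2) ^ ((ν + 1) / 2)))
          * t ^ (-(ν+1))
        = C / σ * (((1 + ν * σ ^ 2 / y ^ 2) * (t ^ 2 / (ν * σ ^ 2))) ^ (-((ν + 1) / 2))) := by
          rw [h3]; ring
      _ ≤ Cnu ν / σ * (1 + t ^ 2 / (ν * σ ^ 2)) ^ (-((ν + 1) / 2)) := by
          rw [← hC]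
          apply mul_le_mul_of_nonneg_left h2 (by positivity)
  -- integrability and integral computation
  have hrint : ∀ y : ℝ, 0 < y → IntegrableOn (fun t : ℝ => t ^ (-(ν+1))) (Ioi y) :=
    fun y hy => integrableOn_Ioi_rpow_of_lt he hy
  have hint : ∀ y : ℝ, 0 < y → IntegrableOn (studentPdf ν σ) (Ioi y) := by
    intro y hy
    apply Integrable.mono' (((hrint y hy).const_mul (C / σ * (ν * σ ^ 2) ^ ((ν + 1) / 2))))
      ((studentPdf_continuous hν hσ).aestronglyMeasurable.restrict)
    filter_upwards [ae_restrict_mem measurableSet_Ioi] with t ht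
    rw [Real.norm_eq_abs, abs_of_nonneg (studentPdf_nonneg hν hσ t)]
    exact hup y hy t ht
  have hval : ∀ y : ℝ, 0 < y →
      ((volume.withDensity fun x => ENNReal.ofReal (studentPdf ν σ x)) (Ioi y)).toReal
        = ∫ t in Ioi y, studentPdf ν σ t := by
    intro y hy
    rw [withDensity_apply _ measurableSet_Ioi,
      ← ofReal_integral_eq_lintegral_ofReal (hint y hy)
        (Filter.Eventually.of_forall fun t => studentPdf_nonneg hν hσ t),
      ENNReal.toReal_ofReal (integral_nonneg fun t => studentPdf_nonneg hν hσ t)]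
  have hIoi : ∀ y : ℝ, 0 < y → ∫ t in Ioi y, t ^ (-(ν+1)) = y ^ (-ν) / ν := by
    intro y hy
    rw [integral_Ioi_rpow_of_lt he hy]
    rw [show -(ν+1) + 1 = -ν by ring]
    field_simp
  -- constant identity
  have hconst : (C / σ * (ν * σ ^ 2) ^ ((ν + 1) / 2)) / ν = A := by
    rw [hA, ← hC]
    have h1 : (ν * σ ^ 2) ^ ((ν + 1) / 2) = ν ^ ((ν + 1) / 2) * σ ^ (ν + 1) := by
      rw [Real.mul_rpow hν.le (sq_nonneg σ), sq_rpow_eq hσ.le,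
        show 2 * ((ν + 1) / 2) = ν + 1 by ring]
    rw [h1]
    have h2 : ν ^ ((ν + 1) / 2) = ν ^ ((ν - 1) / 2) * ν := by
      rw [← Real.rpow_add_one hν.ne' ((ν - 1)/2), show (ν - 1) / 2 + 1 = (ν + 1) / 2 by ring]
    have h3 : σ ^ (ν + 1) = σ ^ ν * σ := by
      rw [Real.rpow_add_one hσ.ne' ν]
    rw [h2, h3]
    field_simp
  -- the squeeze
  have hub : ∀ᶠ y in atTop, y ^ ν *
      ((volume.withDensity fun x => ENNReal.ofReal (studentPdf ν σ x)) (Ioi y)).toReal ≤ A := by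
    filter_upwards [eventually_gt_atTop (0:ℝ)] with y hy
    rw [hval y hy]
    have hle : ∫ t in Ioi y, studentPdf ν σ t
        ≤ ∫ t in Ioi y, (C / σ * (ν * σ ^ 2) ^ ((ν + 1) / 2)) * t ^ (-(ν+1)) :=
      setIntegral_mono_on (hint y hy)
        ((hrint y hy).const_mul _) measurableSet_Ioi (hup y hy)
    have hval2 : ∫ t in Ioi y, (C / σ * (ν * σ ^ 2) ^ ((ν + 1) / 2)) * t ^ (-(ν+1))
        = (C / σ * (ν * σ ^ 2) ^ ((ν + 1) / 2)) * (y ^ (-ν) / ν) := by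
      rw [integral_const_mul, hIoi y hy]
    have hyν : 0 < y ^ ν := Real.rpow_pos_of_pos hy ν
    calc y ^ ν * ∫ t in Ioi y, studentPdf ν σ t
        ≤ y ^ ν * ((C / σ * (ν * σ ^ 2) ^ ((ν + 1) / 2)) * (y ^ (-ν) / ν)) := by
          rw [← hval2]; exact mul_le_mul_of_nonneg_left hle hyν.le
      _ = (y ^ ν * y ^ (-ν)) * ((C / σ * (ν * σ ^ 2) ^ ((ν + 1) / 2)) / ν) := by ring
      _ = A := by
          rw [← Real.rpow_add hy, add_neg_cancel, Real.rpow_zero, one_mul, hconst]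
  have hlb : ∀ᶠ y in atTop, (1 + ν * σ ^ 2 / y ^ 2) ^ (-((ν + 1) / 2)) * A ≤ y ^ ν *
      ((volume.withDensity fun x => ENNReal.ofReal (studentPdf ν σ x)) (Ioi y)).toReal := by
    filter_upwards [eventually_gt_atTop (0:ℝ)] with y hy
    rw [hval y hy]
    have hle : ∫ t in Ioi y,
        ((1 + ν * σ ^ 2 / y ^ 2) ^ (-((ν + 1) / 2)) * (C / σ * (ν * σ ^ 2) ^ ((ν + 1) / 2)))
          * t ^ (-(ν+1)) ≤ ∫ t in Ioi y, studentPdf ν σ t :=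
      setIntegral_mono_on ((hrint y hy).const_mul _) (hint y hy) measurableSet_Ioi (hlo y hy)
    have hval2 : ∫ t in Ioi y,
        ((1 + ν * σ ^ 2 / y ^ 2) ^ (-((ν + 1) / 2)) * (C / σ * (ν * σ ^ 2) ^ ((ν + 1) / 2)))
          * t ^ (-(ν+1))
        = ((1 + ν * σ ^ 2 / y ^ 2) ^ (-((ν + 1) / 2)) * (C / σ * (ν * σ ^ 2) ^ ((ν + 1) / 2)))
          * (y ^ (-ν) / ν) := by
      rw [integral_const_mul, hIoi y hy]
    have hyν : 0 < y ^ ν := Real.rpow_pos_of_pos hy ν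
    calc (1 + ν * σ ^ 2 / y ^ 2) ^ (-((ν + 1) / 2)) * A
        = (y ^ ν * y ^ (-ν)) * ((1 + ν * σ ^ 2 / y ^ 2) ^ (-((ν + 1) / 2))
            * ((C / σ * (ν * σ ^ 2) ^ ((ν + 1) / 2)) / ν)) := by
          rw [← Real.rpow_add hy, add_neg_cancel, Real.rpow_zero, one_mul, hconst]
      _ = y ^ ν * (((1 + ν * σ ^ 2 / y ^ 2) ^ (-((ν + 1) / 2))
            * (C / σ * (ν * σ ^ 2) ^ ((ν + 1) / 2))) * (y ^ (-ν) / ν)) := by ring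
      _ ≤ y ^ ν * ∫ t in Ioi y, studentPdf ν σ t := by
          rw [← hval2]; exact mul_le_mul_of_nonneg_left hle hyν.le
  -- lower bound tends to A
  have hlbA : Tendsto (fun y : ℝ => (1 + ν * σ ^ 2 / y ^ 2) ^ (-((ν + 1) / 2)) * A) atTop (𝓝 A) := by
    have h1 : Tendsto (fun y : ℝ => 1 + ν * σ ^ 2 / y ^ 2) atTop (𝓝 1) := by
      have h2 : Tendsto (fun y : ℝ => ν * σ ^ 2 / y ^ 2) atTop (𝓝 0) := by
        have hpow : Tendsto (fun y : ℝ => y ^ 2) atTop atTop :=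
          tendsto_pow_atTop (by norm_num)
        have := (tendsto_inv_atTop_zero.comp hpow).const_mul (ν * σ ^ 2)
        simpa [div_eq_mul_inv, Function.comp] using this
      simpa using tendsto_const_nhds.add h2
    have h3 : Tendsto (fun y : ℝ => (1 + ν * σ ^ 2 / y ^ 2) ^ (-((ν + 1) / 2))) atTop (𝓝 1) := by
      have := (Real.continuousAt_rpow_const 1 (-((ν + 1) / 2)) (Or.inl one_ne_zero)).tendsto.comp h1
      simpa [Function.comp_def] using this
    simpa using h3.mul_const A
  exact tendsto_of_tendsto_of_tendsto_of_le_of_le' hlbA tendsto_const_nhds hlb hub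



section Quantile
variable {μ : Measure ℝ} [IsProbabilityMeasure μ] {u : ℝ}

lemma tail_toReal_eq (μ : Measure ℝ) [IsProbabilityMeasure μ] (x : ℝ) :
    (μ (Ioi x)).toReal = 1 - cdf μ x := by
  have h1 : μ (Ioi x) = 1 - μ (Iic x) := by
    rw [← compl_Iic, prob_compl_eq_one_sub measurableSet_Iic]
  rw [h1, cdf_eq_real, measureReal_def, ENNReal.toReal_sub_of_le prob_le_one (by simp)]
  simp

lemma quantile_S_nonempty (hu1 : u < 1) : {x : ℝ | u ≤ cdf μ x}.Nonempty := by
  obtain ⟨x, hx⟩ := ((tendsto_cdf_atTop μ).eventually (eventually_ge_nhds hu1)).exists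
  exact ⟨x, hx⟩

lemma quantile_S_bddBelow (hu0 : 0 < u) : BddBelow {x : ℝ | u ≤ cdf μ x} := by
  obtain ⟨x₀, hx₀⟩ := ((tendsto_cdf_atBot μ).eventually (eventually_lt_nhds hu0)).exists
  refine ⟨x₀, fun x hx => ?_⟩
  by_contra hcon
  push_neg at hcon
  exact absurd (hx.trans (monotone_cdf μ hcon.le)) (not_le.2 hx₀)

lemma le_cdf_quantile (hu0 : 0 < u) (hu1 : u < 1) :
    u ≤ cdf μ (quantile (⇑(cdf μ)) u) := by
  set q := quantile (⇑(cdf μ)) u with hq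
  have hne := quantile_S_nonempty (μ := μ) hu1
  have hbdd := quantile_S_bddBelow (μ := μ) hu0
  have key : ∀ z, q < z → u ≤ cdf μ z := by
    intro z hz
    obtain ⟨x, hxS, hxz⟩ := (csInf_lt_iff hbdd hne).1 hz
    exact hxS.trans (monotone_cdf μ hxz.le)
  have hcont : ContinuousWithinAt (⇑(cdf μ)) (Ioi q) q :=
    ((cdf μ).right_continuous q).mono Ioi_subset_Ici_self
  have : Tendsto (⇑(cdf μ)) (𝓝[>] q) (𝓝 (cdf μ q)) := hcont.tendsto
  exact ge_of_tendsto this (eventually_nhdsWithin_of_forall (fun z hz => key z hz))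

lemma cdf_lt_of_lt_quantile (hu0 : 0 < u) {x : ℝ} (hx : x < quantile (⇑(cdf μ)) u) :
    cdf μ x < u := by
  by_contra hcon
  push_neg at hcon
  exact absurd (csInf_le (quantile_S_bddBelow hu0) hcon) (not_le.2 hx)

lemma measure_Iio_quantile_le (hu0 : 0 < u) :
    μ (Iio (quantile (⇑(cdf μ)) u)) ≤ ENNReal.ofReal u := by
  set q := quantile (⇑(cdf μ)) u
  have hIio : Iio q = ⋃ n : ℕ, Iic (q - 1 / (n + 1)) := by
    ext x
    simp only [mem_Iio, mem_iUnion, mem_Iic]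
    constructor
    · intro hx
      obtain ⟨n, hn⟩ := exists_nat_one_div_lt (by linarith : 0 < q - x)
      exact ⟨n, by linarith⟩
    · rintro ⟨n, hn⟩
      have : (0:ℝ) < 1 / (n + 1) := by positivity
      linarith
  rw [hIio]
  have hmono : Monotone fun n : ℕ => Iic (q - 1 / ((n:ℝ) + 1)) := by
    intro m n hmn
    apply Iic_subset_Iic.2
    have hmn' : (m:ℝ) ≤ n := Nat.cast_le.2 hmn
    have : (1:ℝ) / ((n:ℝ) + 1) ≤ 1 / ((m:ℝ) + 1) := by
      apply one_div_le_one_div_of_le (by positivity)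
      linarith
    linarith
  have := tendsto_measure_iUnion_atTop (μ := μ) hmono
  apply le_of_tendsto this
  filter_upwards with n
  have hpos : (0:ℝ) < 1/((n:ℝ)+1) := by positivity
  have hlt : cdf μ (q - 1/(n+1)) < u :=
    cdf_lt_of_lt_quantile hu0 (by linarith)
  calc μ (Iic (q - 1/(n+1))) = ENNReal.ofReal (cdf μ (q - 1/(n+1))) := (ofReal_cdf μ _).symm
  _ ≤ ENNReal.ofReal u := ENNReal.ofReal_le_ofReal hlt.le

lemma quantile_tail_bounds (hu0 : 0 < u) (hu1 : u < 1) :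
    (μ (Ioi (quantile (⇑(cdf μ)) u))).toReal ≤ 1 - u ∧
      1 - u ≤ (μ (Ioi (quantile (⇑(cdf μ)) u - 1))).toReal := by
  set q := quantile (⇑(cdf μ)) u with hqdef
  constructor
  · rw [tail_toReal_eq]
    linarith [le_cdf_quantile (μ := μ) hu0 hu1]
  · have h1 : μ (Ici q) ≤ μ (Ioi (q - 1)) := measure_mono (fun x hx => by
      simp only [mem_Ici] at hx; simp only [mem_Ioi]; linarith)
    have h2 : 1 - ENNReal.ofReal u ≤ μ (Ici q) := by
      have := measure_Iio_quantile_le (μ := μ) hu0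
      have hcompl : μ (Ici q) = 1 - μ (Iio q) := by
        rw [← compl_Iio, prob_compl_eq_one_sub measurableSet_Iio]
      rw [hcompl]
      exact tsub_le_tsub_left this 1
    have h3 : 1 - ENNReal.ofReal u ≤ μ (Ioi (q - 1)) := h2.trans h1
    have h4 := ENNReal.toReal_mono (measure_ne_top μ _) h3
    rw [ENNReal.toReal_sub_of_le (by exact_mod_cast ENNReal.ofReal_le_one.2 hu1.le) (by simp)] at h4
    rw [ENNReal.toReal_ofReal hu0.le] at h4
    simpa using h4

lemma quantile_tendsto_atTop (h : ∀ x, cdf μ x < 1) :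
    Tendsto (fun u => quantile (⇑(cdf μ)) u) (𝓝[<] (1:ℝ)) atTop := by
  rw [tendsto_atTop]
  intro M
  have hM : max (cdf μ M) 0 < 1 := by
    simp only [max_lt_iff]
    exact ⟨h M, one_pos⟩
  have hmem : Ioo (max (cdf μ M) 0) 1 ∈ 𝓝[<] (1:ℝ) :=
    Ioo_mem_nhdsLT_of_mem ⟨hM, le_refl 1⟩
  filter_upwards [hmem] with u hu
  obtain ⟨hu0, hu1⟩ := hu
  have hu0' : 0 < u := lt_of_le_of_lt (le_max_right _ _) hu0
  have huM : cdf μ M < u := lt_of_le_of_lt (le_max_left _ _) hu0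
  apply le_csInf (quantile_S_nonempty hu1)
  intro x hx
  by_contra hcon
  push_neg at hcon
  exact absurd ((monotone_cdf μ hcon.le).trans_lt huM) (not_lt.2 hx)

end Quantile


section helpers
variable {Ω : Type*} [MeasurableSpace Ω] {P : Measure Ω} [IsProbabilityMeasure P]

lemma toReal_mono_meas {A B : Set Ω} (h : A ⊆ B) : (P A).toReal ≤ (P B).toReal :=
  ENNReal.toReal_mono (measure_ne_top P B) (measure_mono h)

lemma toReal_union_le (A B : Set Ω) :
    (P (A ∪ B)).toReal ≤ (P A).toReal + (P B).toReal := by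
  have h := measure_union_le (μ := P) A B
  have h2 := ENNReal.toReal_mono (by finiteness) h
  rwa [ENNReal.toReal_add (measure_ne_top P A) (measure_ne_top P B)] at h2

lemma toReal_union_ge (A B : Set Ω) (hB : MeasurableSet B) :
    (P A).toReal + (P B).toReal - (P (A ∩ B)).toReal ≤ (P (A ∪ B)).toReal := by
  have h := measure_union_add_inter (μ := P) A hB
  have h2 : (P (A ∪ B)).toReal + (P (A ∩ B)).toReal = (P A).toReal + (P B).toReal := by
    rw [← ENNReal.toReal_add (measure_ne_top P _) (measure_ne_top P _),
      ← ENNReal.toReal_add (measure_ne_top P _) (measure_ne_top P _), h]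
  linarith

end helpers

section tailhelpers

lemma lin_ratio {β : Type*} {l : Filter β} {w : β → ℝ} {a b : ℝ} (ha : 0 < a)
    (hw : Tendsto w l atTop) :
    Tendsto (fun u => w u / (a * w u + b)) l (𝓝 a⁻¹) := by
  have h1 : Tendsto (fun u => a + b * (w u)⁻¹) l (𝓝 a) := by
    have := (tendsto_inv_atTop_zero.comp hw).const_mul b
    simpa using tendsto_const_nhds.add this
  have h2 : Tendsto (fun u => (a + b * (w u)⁻¹)⁻¹) l (𝓝 a⁻¹) := h1.inv₀ ha.ne'
  apply h2.congr'
  have hw0 : ∀ᶠ u in l, 0 < w u := hw.eventually_gt_atTop 0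
  have hab : ∀ᶠ u in l, 0 < a * w u + b := by
    have : Tendsto (fun u => a * w u + b) l atTop :=
      tendsto_atTop_add_const_right _ b (hw.const_mul_atTop ha)
    exact this.eventually_gt_atTop 0
  filter_upwards [hw0, hab] with u h1' h2'
  field_simp

lemma Hgen {β : Type*} {l : Filter β} {w g h : β → ℝ} {ν c ρ : ℝ}
    (hc : Tendsto (fun b => g b ^ ν * h b) l (𝓝 c))
    (hg : Tendsto g l atTop) (hr : Tendsto (fun b => w b / g b) l (𝓝 ρ))
    (hρ : 0 < ρ) :
    Tendsto (fun b => w b ^ ν * h b) l (𝓝 (ρ ^ ν * c)) := by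
  have hrpow : Tendsto (fun b => (w b / g b) ^ ν) l (𝓝 (ρ ^ ν)) :=
    (Real.continuousAt_rpow_const ρ ν (Or.inl hρ.ne')).tendsto.comp hr
  have hmul := hrpow.mul hc
  apply hmul.congr'
  have hg0 : ∀ᶠ b in l, 0 < g b := hg.eventually_gt_atTop 0
  have hw0 : ∀ᶠ b in l, 0 < w b := by
    filter_upwards [hg0, hr.eventually_const_lt (by linarith : (0:ℝ) < ρ)] with b h1 h2
    by_contra hcon
    push_neg at hcon
    have : w b / g b ≤ 0 := div_nonpos_of_nonpos_of_nonneg hcon h1.le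
    linarith
  filter_upwards [hg0, hw0] with b h1 h2
  rw [Real.div_rpow h2.le h1.le]
  field_simp

lemma tail_zero {F : ℝ → ℝ} {ν c : ℝ} (hν : 0 < ν)
    (h : Tendsto (fun x => x ^ ν * F x) atTop (𝓝 c)) :
    Tendsto F atTop (𝓝 0) := by
  have h2 : Tendsto (fun x : ℝ => x ^ ν * F x * x ^ (-ν)) atTop (𝓝 (c * 0)) :=
    h.mul (tendsto_rpow_neg_atTop hν)
  rw [mul_zero] at h2
  apply h2.congr'
  filter_upwards [eventually_gt_atTop (0:ℝ)] with x hx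
  rw [mul_comm (x ^ ν) (F x), mul_assoc, ← Real.rpow_add hx]
  simp

lemma tail_comp_lin {F : ℝ → ℝ} {ν c : ℝ}
    (hF : Tendsto (fun x => x ^ ν * F x) atTop (𝓝 c))
    {β : Type*} {l : Filter β} {w : β → ℝ} (hw : Tendsto w l atTop)
    {a : ℝ} (b : ℝ) (ha : 0 < a) :
    Tendsto (fun u => w u ^ ν * F (a * w u + b)) l (𝓝 (a⁻¹ ^ ν * c)) := by
  have hg : Tendsto (fun u => a * w u + b) l atTop :=
    tendsto_atTop_add_const_right _ b (hw.const_mul_atTop ha)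
  exact Hgen (hF.comp hg) hg (lin_ratio ha hw) (inv_pos.2 ha)

lemma tail_comp_lin0 {F : ℝ → ℝ} {ν c : ℝ}
    (hF : Tendsto (fun x => x ^ ν * F x) atTop (𝓝 c))
    {β : Type*} {l : Filter β} {w : β → ℝ} (hw : Tendsto w l atTop)
    {a : ℝ} (ha : 0 < a) :
    Tendsto (fun u => w u ^ ν * F (a * w u)) l (𝓝 (a⁻¹ ^ ν * c)) := by
  have := tail_comp_lin hF hw 0 ha
  simpa using this

end tailhelpers

section bigjump
variable {Ω : Type*} [MeasurableSpace Ω] (P : Measure Ω) [IsProbabilityMeasure P]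
  {ν α cY cε : ℝ} {Y ε : Ω → ℝ}

/-- Tail of `α Y + ε` for independent regularly-varying `Y`, `ε`. -/
lemma sum_tail (hν : 0 < ν) (hα : 0 < α) (hcY : 0 < cY) (hcε : 0 < cε)
    (hY : Measurable Y) (hε : Measurable ε) (hind : IndepFun Y ε P)
    (hYt : Tendsto (fun x => x ^ ν * (P (Y ⁻¹' Ioi x)).toReal) atTop (𝓝 cY))
    (hεt : Tendsto (fun x => x ^ ν * (P (ε ⁻¹' Ioi x)).toReal) atTop (𝓝 cε))
    (hY1 : Tendsto (fun x => (P (Y ⁻¹' Ioi x)).toReal) atBot (𝓝 1))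
    (hε1 : Tendsto (fun x => (P (ε ⁻¹' Ioi x)).toReal) atBot (𝓝 1)) :
    Tendsto (fun x => x ^ ν * (P ((fun ω => α * Y ω + ε ω) ⁻¹' Ioi x)).toReal) atTop
      (𝓝 (α ^ ν * cY + cε)) := by
  set TY : ℝ → ℝ := fun a => (P (Y ⁻¹' Ioi a)).toReal with hTY
  set Tε : ℝ → ℝ := fun a => (P (ε ⁻¹' Ioi a)).toReal with hTε
  have hI : ∀ a b : ℝ, (P (Y ⁻¹' Ioi a ∩ ε ⁻¹' Ioi b)).toReal = TY a * Tε b := by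
    intro a b
    rw [hind.measure_inter_preimage_eq_mul _ _ measurableSet_Ioi measurableSet_Ioi,
      ENNReal.toReal_mul]
  set L := α ^ ν * cY + cε with hL
  rw [Metric.tendsto_nhds]
  intro η hη
  simp only [Real.dist_eq, abs_sub_lt_iff]
  rw [eventually_and]
  constructor
  · -- upper bound
    -- choose δ
    obtain ⟨δ, hδmem, hδψ⟩ : ∃ δ : ℝ, δ ∈ Ioo (0:ℝ) 1 ∧
        (((1 - δ) / α)⁻¹) ^ ν * cY + ((1 - δ)⁻¹) ^ ν * cε < L + η / 2 := by
      have hc1 : ContinuousAt (fun δ : ℝ => (((1 - δ) / α)⁻¹) ^ ν * cY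
          + ((1 - δ)⁻¹) ^ ν * cε) 0 := by
        have h1 : ContinuousAt (fun δ : ℝ => ((1 - δ) / α)⁻¹) 0 := by
          apply ContinuousAt.inv₀ (by fun_prop)
          simp [hα.ne']
        have h2 : ContinuousAt (fun δ : ℝ => (1 - δ)⁻¹) 0 :=
          ContinuousAt.inv₀ (by fun_prop) (by norm_num)
        exact ((h1.rpow_const (Or.inl (by simp [hα.ne']))).mul continuousAt_const).add
          ((h2.rpow_const (Or.inl (by norm_num))).mul continuousAt_const)
      have hval : (fun δ : ℝ => (((1 - δ) / α)⁻¹) ^ ν * cY + ((1 - δ)⁻¹) ^ ν * cε) 0 = L := by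
        simp [hL, one_div, inv_inv]
      have htend : Tendsto (fun δ : ℝ => (((1 - δ) / α)⁻¹) ^ ν * cY + ((1 - δ)⁻¹) ^ ν * cε)
          (𝓝[>] (0:ℝ)) (𝓝 L) := by
        rw [← hval]
        exact hc1.tendsto.mono_left nhdsWithin_le_nhds
      have hev := htend.eventually_lt_const (by linarith : L < L + η / 2)
      have hev2 : Ioo (0:ℝ) 1 ∈ 𝓝[>] (0:ℝ) := Ioo_mem_nhdsGT_of_mem ⟨le_refl 0, one_pos⟩
      obtain ⟨δ, h1, h2⟩ := (hev.and (eventually_of_mem hev2 (fun x hx => hx))).exists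
      exact ⟨δ, h2, h1⟩
    obtain ⟨hδ0, hδ1⟩ := hδmem
    have h1δ : 0 < 1 - δ := by linarith
    -- limits of upper bounding terms
    have T1 := tail_comp_lin0 hYt tendsto_id (div_pos h1δ hα)
    have T2 := tail_comp_lin0 hεt tendsto_id h1δ
    have T3 : Tendsto (fun x : ℝ => x ^ ν * TY (δ / α * x) * Tε (δ * x)) atTop
        (𝓝 (((δ / α)⁻¹) ^ ν * cY * 0)) := by
      exact (tail_comp_lin0 hYt tendsto_id (div_pos hδ0 hα)).mul
        ((tail_zero hν hεt).comp (tendsto_id.const_mul_atTop hδ0))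
    have hsum : Tendsto (fun x : ℝ => x ^ ν * TY ((1 - δ) / α * x)
        + x ^ ν * Tε ((1 - δ) * x) + x ^ ν * TY (δ / α * x) * Tε (δ * x)) atTop
        (𝓝 ((((1 - δ) / α)⁻¹) ^ ν * cY + ((1 - δ)⁻¹) ^ ν * cε + ((δ / α)⁻¹) ^ ν * cY * 0)) :=
      (T1.add T2).add T3
    have hlt : (((1 - δ) / α)⁻¹) ^ ν * cY + ((1 - δ)⁻¹) ^ ν * cε + ((δ / α)⁻¹) ^ ν * cY * 0
        < L + η := by
      rw [mul_zero, add_zero]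
      linarith
    have hev2 := hsum.eventually_lt_const hlt
    filter_upwards [hev2, eventually_gt_atTop (0:ℝ)] with x hx hx0
    refine lt_of_le_of_lt ?_ (by linarith : (x ^ ν * TY ((1 - δ) / α * x)
        + x ^ ν * Tε ((1 - δ) * x) + x ^ ν * TY (δ / α * x) * Tε (δ * x)) - L < η)
    have hsub : ((fun ω => α * Y ω + ε ω) ⁻¹' Ioi x)
        ⊆ (Y ⁻¹' Ioi ((1 - δ) / α * x)) ∪ ((ε ⁻¹' Ioi ((1 - δ) * x))
          ∪ (Y ⁻¹' Ioi (δ / α * x) ∩ ε ⁻¹' Ioi (δ * x))) := by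
      intro ω hω
      simp only [mem_preimage, mem_Ioi, mem_union, mem_inter_iff] at *
      by_cases hY1 : (1 - δ) / α * x < Y ω
      · exact Or.inl hY1
      push_neg at hY1
      have hαY : α * Y ω ≤ (1 - δ) * x := by
        have := mul_le_mul_of_nonneg_left hY1 hα.le
        calc α * Y ω ≤ α * ((1 - δ) / α * x) := this
          _ = (1 - δ) * x := by field_simp
      by_cases hε1' : (1 - δ) * x < ε ω
      · exact Or.inr (Or.inl hε1')
      push_neg at hε1'
      right; right
      constructor
      · have hαY2 : δ * x < α * Y ω := by linarith
        have := mul_lt_mul_of_pos_left hαY2 (inv_pos.2 hα)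
        calc δ / α * x = α⁻¹ * (δ * x) := by (field_simp; try ring)
          _ < α⁻¹ * (α * Y ω) := this
          _ = Y ω := by field_simp
      · linarith
    have hmeas : (P ((fun ω => α * Y ω + ε ω) ⁻¹' Ioi x)).toReal
        ≤ TY ((1 - δ) / α * x) + Tε ((1 - δ) * x) + TY (δ / α * x) * Tε (δ * x) := by
      calc (P ((fun ω => α * Y ω + ε ω) ⁻¹' Ioi x)).toReal
          ≤ (P ((Y ⁻¹' Ioi ((1 - δ) / α * x)) ∪ ((ε ⁻¹' Ioi ((1 - δ) * x))
            ∪ (Y ⁻¹' Ioi (δ / α * x) ∩ ε ⁻¹' Ioi (δ * x))))).toReal := toReal_mono_meas hsub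
        _ ≤ (P (Y ⁻¹' Ioi ((1 - δ) / α * x))).toReal + (P ((ε ⁻¹' Ioi ((1 - δ) * x))
            ∪ (Y ⁻¹' Ioi (δ / α * x) ∩ ε ⁻¹' Ioi (δ * x)))).toReal := toReal_union_le _ _
        _ ≤ (P (Y ⁻¹' Ioi ((1 - δ) / α * x))).toReal + ((P (ε ⁻¹' Ioi ((1 - δ) * x))).toReal
            + (P (Y ⁻¹' Ioi (δ / α * x) ∩ ε ⁻¹' Ioi (δ * x))).toReal) := by
              have := toReal_union_le (P := P) (ε ⁻¹' Ioi ((1 - δ) * x))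
                (Y ⁻¹' Ioi (δ / α * x) ∩ ε ⁻¹' Ioi (δ * x))
              linarith
        _ = TY ((1 - δ) / α * x) + Tε ((1 - δ) * x) + TY (δ / α * x) * Tε (δ * x) := by
              rw [hI]; ring
    have hxν : (0:ℝ) ≤ x ^ ν := (Real.rpow_pos_of_pos hx0 ν).le
    have := mul_le_mul_of_nonneg_left hmeas hxν
    calc x ^ ν * (P ((fun ω => α * Y ω + ε ω) ⁻¹' Ioi x)).toReal - L
        ≤ x ^ ν * (TY ((1 - δ) / α * x) + Tε ((1 - δ) * x)
          + TY (δ / α * x) * Tε (δ * x)) - L := by linarith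
      _ = (x ^ ν * TY ((1 - δ) / α * x) + x ^ ν * Tε ((1 - δ) * x)
          + x ^ ν * TY (δ / α * x) * Tε (δ * x)) - L := by ring
  · -- lower bound
    obtain ⟨m, hm1, hmψ⟩ : ∃ m : ℝ, 1 ≤ m ∧
        L - η / 2 < α ^ ν * cY * Tε (-m) + TY (-(m * α⁻¹)) * cε := by
      have htε : Tendsto (fun m : ℝ => Tε (-m)) atTop (𝓝 1) :=
        hε1.comp tendsto_neg_atTop_atBot
      have htY : Tendsto (fun m : ℝ => TY (-(m * α⁻¹))) atTop (𝓝 1) :=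
        hY1.comp (tendsto_neg_atTop_atBot.comp (tendsto_id.atTop_mul_const (inv_pos.2 hα)))
      have hcomb : Tendsto (fun m : ℝ => α ^ ν * cY * Tε (-m) + TY (-(m * α⁻¹)) * cε) atTop
          (𝓝 (α ^ ν * cY * 1 + 1 * cε)) := ((htε.const_mul _).add (htY.mul_const _))
      have hgt : L - η / 2 < α ^ ν * cY * 1 + 1 * cε := by rw [hL]; ring_nf; linarith
      obtain ⟨m, h1, h2⟩ := ((hcomb.eventually_const_lt hgt).and (eventually_ge_atTop 1)).exists
      exact ⟨m, h2, h1⟩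
    -- limits of lower bounding terms
    have TS : Tendsto (fun x : ℝ => x ^ ν * TY (α⁻¹ * x + m * α⁻¹) * Tε (-m)) atTop
        (𝓝 ((α⁻¹)⁻¹ ^ ν * cY * Tε (-m))) :=
      (tail_comp_lin hYt tendsto_id (m * α⁻¹) (inv_pos.2 hα)).mul_const _
    have TT : Tendsto (fun x : ℝ => TY (-(m * α⁻¹)) * (x ^ ν * Tε (1 * x + m))) atTop
        (𝓝 (TY (-(m * α⁻¹)) * ((1:ℝ)⁻¹ ^ ν * cε))) :=
      (tail_comp_lin hεt tendsto_id m one_pos).const_mul _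
    have TC : Tendsto (fun x : ℝ => x ^ ν * TY (α⁻¹ * x + m * α⁻¹) * Tε (1 * x + m)) atTop
        (𝓝 ((α⁻¹)⁻¹ ^ ν * cY * 0)) := by
      refine (tail_comp_lin hYt tendsto_id (m * α⁻¹) (inv_pos.2 hα)).mul ?_
      exact (tail_zero hν hεt).comp (tendsto_atTop_add_const_right _ m
        (tendsto_id.const_mul_atTop one_pos))
    have hφ : Tendsto (fun x : ℝ => x ^ ν * TY (α⁻¹ * x + m * α⁻¹) * Tε (-m)
        + TY (-(m * α⁻¹)) * (x ^ ν * Tε (1 * x + m))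
        - x ^ ν * TY (α⁻¹ * x + m * α⁻¹) * Tε (1 * x + m)) atTop
        (𝓝 ((α⁻¹)⁻¹ ^ ν * cY * Tε (-m) + TY (-(m * α⁻¹)) * ((1:ℝ)⁻¹ ^ ν * cε)
          - (α⁻¹)⁻¹ ^ ν * cY * 0)) := (TS.add TT).sub TC
    have hq : L - η < (α⁻¹)⁻¹ ^ ν * cY * Tε (-m) + TY (-(m * α⁻¹)) * ((1:ℝ)⁻¹ ^ ν * cε)
        - (α⁻¹)⁻¹ ^ ν * cY * 0 := by
      simp only [inv_inv, inv_one, Real.one_rpow, mul_zero, sub_zero, one_mul]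
      linarith
    filter_upwards [hφ.eventually_const_lt hq, eventually_gt_atTop (0:ℝ)] with x hx hx0
    have hS : (Y ⁻¹' Ioi (α⁻¹ * x + m * α⁻¹) ∩ ε ⁻¹' Ioi (-m))
        ∪ (Y ⁻¹' Ioi (-(m * α⁻¹)) ∩ ε ⁻¹' Ioi (1 * x + m))
        ⊆ (fun ω => α * Y ω + ε ω) ⁻¹' Ioi x := by
      rintro ω (⟨h1, h2⟩ | ⟨h1, h2⟩) <;>
        simp only [mem_preimage, mem_Ioi] at *
      · have : x + m < α * Y ω := by
          have := mul_lt_mul_of_pos_left h1 hα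
          calc x + m = α * (α⁻¹ * x + m * α⁻¹) := by (field_simp; try ring)
            _ < α * Y ω := this
        linarith
      · have : -m < α * Y ω := by
          have := mul_lt_mul_of_pos_left h1 hα
          calc -m = α * (-(m * α⁻¹)) := by (field_simp; try ring)
            _ < α * Y ω := this
        linarith
    have hcross : (Y ⁻¹' Ioi (α⁻¹ * x + m * α⁻¹) ∩ ε ⁻¹' Ioi (-m))
        ∩ (Y ⁻¹' Ioi (-(m * α⁻¹)) ∩ ε ⁻¹' Ioi (1 * x + m))
        ⊆ Y ⁻¹' Ioi (α⁻¹ * x + m * α⁻¹) ∩ ε ⁻¹' Ioi (1 * x + m) := by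
      rintro ω ⟨⟨h1, _⟩, ⟨_, h2⟩⟩
      exact ⟨h1, h2⟩
    have hge : x ^ ν * TY (α⁻¹ * x + m * α⁻¹) * Tε (-m)
        + TY (-(m * α⁻¹)) * (x ^ ν * Tε (1 * x + m))
        - x ^ ν * TY (α⁻¹ * x + m * α⁻¹) * Tε (1 * x + m)
        ≤ x ^ ν * (P ((fun ω => α * Y ω + ε ω) ⁻¹' Ioi x)).toReal := by
      have hxν : (0:ℝ) ≤ x ^ ν := (Real.rpow_pos_of_pos hx0 ν).le
      have hu := toReal_union_ge (P := P) (Y ⁻¹' Ioi (α⁻¹ * x + m * α⁻¹) ∩ ε ⁻¹' Ioi (-m))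
        (Y ⁻¹' Ioi (-(m * α⁻¹)) ∩ ε ⁻¹' Ioi (1 * x + m))
        ((hY measurableSet_Ioi).inter (hε measurableSet_Ioi))
      have hm1' := toReal_mono_meas (P := P) hS
      have hm2' := toReal_mono_meas (P := P) hcross
      have e1 : (P (Y ⁻¹' Ioi (α⁻¹ * x + m * α⁻¹) ∩ ε ⁻¹' Ioi (-m))).toReal
          = TY (α⁻¹ * x + m * α⁻¹) * Tε (-m) := hI _ _
      have e2 : (P (Y ⁻¹' Ioi (-(m * α⁻¹)) ∩ ε ⁻¹' Ioi (1 * x + m))).toReal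
          = TY (-(m * α⁻¹)) * Tε (1 * x + m) := hI _ _
      have e3 : (P (Y ⁻¹' Ioi (α⁻¹ * x + m * α⁻¹) ∩ ε ⁻¹' Ioi (1 * x + m))).toReal
          = TY (α⁻¹ * x + m * α⁻¹) * Tε (1 * x + m) := hI _ _
      have key : TY (α⁻¹ * x + m * α⁻¹) * Tε (-m) + TY (-(m * α⁻¹)) * Tε (1 * x + m)
          - TY (α⁻¹ * x + m * α⁻¹) * Tε (1 * x + m)
          ≤ (P ((fun ω => α * Y ω + ε ω) ⁻¹' Ioi x)).toReal := by
        rw [← e1, ← e2]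
        have : (P ((Y ⁻¹' Ioi (α⁻¹ * x + m * α⁻¹) ∩ ε ⁻¹' Ioi (-m))
            ∩ (Y ⁻¹' Ioi (-(m * α⁻¹)) ∩ ε ⁻¹' Ioi (1 * x + m)))).toReal
            ≤ TY (α⁻¹ * x + m * α⁻¹) * Tε (1 * x + m) := by
          rw [← e3]; exact hm2'
        linarith
      have := mul_le_mul_of_nonneg_left key hxν
      calc x ^ ν * TY (α⁻¹ * x + m * α⁻¹) * Tε (-m)
          + TY (-(m * α⁻¹)) * (x ^ ν * Tε (1 * x + m))
          - x ^ ν * TY (α⁻¹ * x + m * α⁻¹) * Tε (1 * x + m)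
          = x ^ ν * (TY (α⁻¹ * x + m * α⁻¹) * Tε (-m) + TY (-(m * α⁻¹)) * Tε (1 * x + m)
            - TY (α⁻¹ * x + m * α⁻¹) * Tε (1 * x + m)) := by ring
        _ ≤ x ^ ν * (P ((fun ω => α * Y ω + ε ω) ⁻¹' Ioi x)).toReal := this
    linarith

end bigjump

section bigjump2
variable {Ω : Type*} [MeasurableSpace Ω] (P : Measure Ω) [IsProbabilityMeasure P]
  {ν α cY cε : ℝ} {Y ε : Ω → ℝ}

lemma joint_tail (hν : 0 < ν) (hα : 0 < α) (hcY : 0 < cY)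
    (hY : Measurable Y) (hε : Measurable ε) (hind : IndepFun Y ε P)
    (hYt : Tendsto (fun x => x ^ ν * (P (Y ⁻¹' Ioi x)).toReal) atTop (𝓝 cY))
    (hεt : Tendsto (fun x => x ^ ν * (P (ε ⁻¹' Ioi x)).toReal) atTop (𝓝 cε))
    (hε1 : Tendsto (fun x => (P (ε ⁻¹' Ioi x)).toReal) atBot (𝓝 1))
    {β : Type*} {l : Filter β} {s t : β → ℝ}
    (hs : Tendsto s l atTop) (ht : Tendsto t l atTop)
    (hts : ∀ᶠ u in l, α * s u < t u) :
    Tendsto (fun u => t u ^ ν *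
      (P ((fun ω => α * Y ω + ε ω) ⁻¹' Ioi (t u) ∩ Y ⁻¹' Ioi (s u))).toReal) l
      (𝓝 (α ^ ν * cY)) := by
  set TY : ℝ → ℝ := fun a => (P (Y ⁻¹' Ioi a)).toReal with hTY
  set Tε : ℝ → ℝ := fun a => (P (ε ⁻¹' Ioi a)).toReal with hTε
  have hI : ∀ a b : ℝ, (P (Y ⁻¹' Ioi a ∩ ε ⁻¹' Ioi b)).toReal = TY a * Tε b := by
    intro a b
    rw [hind.measure_inter_preimage_eq_mul _ _ measurableSet_Ioi measurableSet_Ioi,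
      ENNReal.toReal_mul]
  set L := α ^ ν * cY with hL
  rw [Metric.tendsto_nhds]
  intro η hη
  simp only [Real.dist_eq, abs_sub_lt_iff]
  rw [eventually_and]
  constructor
  · -- upper bound
    obtain ⟨δ, hδmem, hδψ⟩ : ∃ δ : ℝ, δ ∈ Ioo (0:ℝ) 1 ∧
        (((1 - δ) / α)⁻¹) ^ ν * cY < L + η / 2 := by
      have h1 : ContinuousAt (fun δ : ℝ => ((1 - δ) / α)⁻¹) 0 := by
        apply ContinuousAt.inv₀ (by fun_prop)
        simp [hα.ne']
      have hc1 : ContinuousAt (fun δ : ℝ => (((1 - δ) / α)⁻¹) ^ ν * cY) 0 :=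
        (h1.rpow_const (Or.inl (by simp [hα.ne']))).mul continuousAt_const
      have hval : (fun δ : ℝ => (((1 - δ) / α)⁻¹) ^ ν * cY) 0 = L := by
        simp [hL, one_div, inv_inv]
      have htend : Tendsto (fun δ : ℝ => (((1 - δ) / α)⁻¹) ^ ν * cY) (𝓝[>] (0:ℝ)) (𝓝 L) := by
        rw [← hval]
        exact hc1.tendsto.mono_left nhdsWithin_le_nhds
      have hev := htend.eventually_lt_const (by linarith : L < L + η / 2)
      have hev2 : Ioo (0:ℝ) 1 ∈ 𝓝[>] (0:ℝ) := Ioo_mem_nhdsGT_of_mem ⟨le_refl 0, one_pos⟩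
      obtain ⟨δ, h1', h2⟩ := (hev.and (eventually_of_mem hev2 (fun x hx => hx))).exists
      exact ⟨δ, h2, h1'⟩
    obtain ⟨hδ0, hδ1⟩ := hδmem
    have h1δ : 0 < 1 - δ := by linarith
    have T1 := tail_comp_lin0 hYt ht (div_pos h1δ hα)
    have T2 : Tendsto (fun u => TY (s u) * (t u ^ ν * Tε (δ * t u))) l
        (𝓝 (0 * ((δ⁻¹) ^ ν * cε))) :=
      ((tail_zero hν hYt).comp hs).mul (tail_comp_lin0 hεt ht hδ0)
    have hsum : Tendsto (fun u => t u ^ ν * TY ((1 - δ) / α * t u)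
        + TY (s u) * (t u ^ ν * Tε (δ * t u))) l
        (𝓝 ((((1 - δ) / α)⁻¹) ^ ν * cY + 0 * ((δ⁻¹) ^ ν * cε))) := T1.add T2
    have hlt : (((1 - δ) / α)⁻¹) ^ ν * cY + 0 * ((δ⁻¹) ^ ν * cε) < L + η := by
      rw [zero_mul, add_zero]; linarith
    filter_upwards [hsum.eventually_lt_const hlt, ht.eventually_gt_atTop 0] with u hu ht0
    have hsub : ((fun ω => α * Y ω + ε ω) ⁻¹' Ioi (t u) ∩ Y ⁻¹' Ioi (s u))
        ⊆ (Y ⁻¹' Ioi ((1 - δ) / α * t u)) ∪ (Y ⁻¹' Ioi (s u) ∩ ε ⁻¹' Ioi (δ * t u)) := by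
      rintro ω ⟨h1, h2⟩
      simp only [mem_preimage, mem_Ioi, mem_union, mem_inter_iff] at *
      by_cases hY1 : (1 - δ) / α * t u < Y ω
      · exact Or.inl hY1
      push_neg at hY1
      have hαY : α * Y ω ≤ (1 - δ) * t u := by
        have := mul_le_mul_of_nonneg_left hY1 hα.le
        calc α * Y ω ≤ α * ((1 - δ) / α * t u) := this
          _ = (1 - δ) * t u := by (field_simp; try ring)
      exact Or.inr ⟨h2, by linarith⟩
    have hmeas : (P ((fun ω => α * Y ω + ε ω) ⁻¹' Ioi (t u) ∩ Y ⁻¹' Ioi (s u))).toReal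
        ≤ TY ((1 - δ) / α * t u) + TY (s u) * Tε (δ * t u) := by
      calc (P ((fun ω => α * Y ω + ε ω) ⁻¹' Ioi (t u) ∩ Y ⁻¹' Ioi (s u))).toReal
          ≤ (P ((Y ⁻¹' Ioi ((1 - δ) / α * t u))
            ∪ (Y ⁻¹' Ioi (s u) ∩ ε ⁻¹' Ioi (δ * t u)))).toReal := toReal_mono_meas hsub
        _ ≤ (P (Y ⁻¹' Ioi ((1 - δ) / α * t u))).toReal
            + (P (Y ⁻¹' Ioi (s u) ∩ ε ⁻¹' Ioi (δ * t u))).toReal := toReal_union_le _ _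
        _ = TY ((1 - δ) / α * t u) + TY (s u) * Tε (δ * t u) := by rw [hI]
    have hxν : (0:ℝ) ≤ t u ^ ν := (Real.rpow_pos_of_pos ht0 ν).le
    have := mul_le_mul_of_nonneg_left hmeas hxν
    have heq : t u ^ ν * (TY ((1 - δ) / α * t u) + TY (s u) * Tε (δ * t u))
        = t u ^ ν * TY ((1 - δ) / α * t u) + TY (s u) * (t u ^ ν * Tε (δ * t u)) := by ring
    linarith
  · -- lower bound
    obtain ⟨m, hm0, hmψ⟩ : ∃ m : ℝ, 0 ≤ m ∧ L - η / 2 < (α⁻¹)⁻¹ ^ ν * cY * Tε (-m) := by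
      have htε : Tendsto (fun m : ℝ => (α⁻¹)⁻¹ ^ ν * cY * Tε (-m)) atTop
          (𝓝 ((α⁻¹)⁻¹ ^ ν * cY * 1)) :=
        (hε1.comp tendsto_neg_atTop_atBot).const_mul _
      have hgt : L - η / 2 < (α⁻¹)⁻¹ ^ ν * cY * 1 := by
        rw [inv_inv, mul_one, hL]; linarith
      obtain ⟨m, h1, h2⟩ := ((htε.eventually_const_lt hgt).and (eventually_ge_atTop 0)).exists
      exact ⟨m, h2, h1⟩
    have TS : Tendsto (fun u => t u ^ ν * TY (α⁻¹ * t u + m * α⁻¹) * Tε (-m)) l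
        (𝓝 ((α⁻¹)⁻¹ ^ ν * cY * Tε (-m))) :=
      (tail_comp_lin hYt ht (m * α⁻¹) (inv_pos.2 hα)).mul_const _
    filter_upwards [TS.eventually_const_lt hmψ, ht.eventually_gt_atTop 0, hts,
      hs.eventually_gt_atTop 0] with u hu ht0 hts' hs0
    have hsub : (Y ⁻¹' Ioi (α⁻¹ * t u + m * α⁻¹) ∩ ε ⁻¹' Ioi (-m))
        ⊆ (fun ω => α * Y ω + ε ω) ⁻¹' Ioi (t u) ∩ Y ⁻¹' Ioi (s u) := by
      rintro ω ⟨h1, h2⟩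
      simp only [mem_preimage, mem_Ioi, mem_inter_iff] at *
      have hαY : t u + m < α * Y ω := by
        have := mul_lt_mul_of_pos_left h1 hα
        calc t u + m = α * (α⁻¹ * t u + m * α⁻¹) := by (field_simp; try ring)
          _ < α * Y ω := this
      constructor
      · linarith
      · -- Y ω > s u
        have h3 : α * s u < α * Y ω := by linarith
        exact lt_of_mul_lt_mul_left h3 hα.le
    have hge : t u ^ ν * TY (α⁻¹ * t u + m * α⁻¹) * Tε (-m)
        ≤ t u ^ ν * (P ((fun ω => α * Y ω + ε ω) ⁻¹' Ioi (t u) ∩ Y ⁻¹' Ioi (s u))).toReal := by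
      have hxν : (0:ℝ) ≤ t u ^ ν := (Real.rpow_pos_of_pos ht0 ν).le
      have := mul_le_mul_of_nonneg_left
        ((hI (α⁻¹ * t u + m * α⁻¹) (-m)) ▸ toReal_mono_meas (P := P) hsub) hxν
      calc t u ^ ν * TY (α⁻¹ * t u + m * α⁻¹) * Tε (-m)
          = t u ^ ν * (TY (α⁻¹ * t u + m * α⁻¹) * Tε (-m)) := by ring
        _ ≤ t u ^ ν * (P ((fun ω => α * Y ω + ε ω) ⁻¹' Ioi (t u) ∩ Y ⁻¹' Ioi (s u))).toReal :=
            this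
    linarith

end bigjump2


lemma tail_pos {F : ℝ → ℝ} {ν c : ℝ} (hc : 0 < c) (hF : Antitone F)
    (h : Tendsto (fun x => x ^ ν * F x) atTop (𝓝 c)) (x : ℝ) : 0 < F x := by
  have hev := (h.eventually_const_lt (by linarith : (0:ℝ) < c)).and
    (eventually_gt_atTop (max x 0))
  obtain ⟨y, hy1, hy2⟩ := hev.exists
  have hy0 : 0 < y := lt_of_le_of_lt (le_max_right x 0) hy2
  have hFy : 0 < F y := by
    by_contra hcon
    push_neg at hcon
    have : y ^ ν * F y ≤ 0 :=
      mul_nonpos_of_nonneg_of_nonpos (Real.rpow_pos_of_pos hy0 ν).le hcon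
    linarith
  exact lt_of_lt_of_le hFy (hF ((le_max_left x 0).trans hy2.le))

lemma tail_tendsto_atBot (μ : Measure ℝ) [IsProbabilityMeasure μ] :
    Tendsto (fun x => (μ (Ioi x)).toReal) atBot (𝓝 1) := by
  have h2 : Tendsto (fun x => 1 - cdf μ x) atBot (𝓝 (1 - 0)) :=
    tendsto_const_nhds.sub (tendsto_cdf_atBot μ)
  rw [sub_zero] at h2
  exact h2.congr fun x => (tail_toReal_eq μ x).symm

theorem stmt17 {Ω : Type*} [MeasurableSpace Ω] (P : Measure Ω) [IsProbabilityMeasure P]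
    (ν σ α : ℝ) (hν : 0 < ν) (hσ : 0 < σ) (hα : 0 < α)
    (Y ε : Ω → ℝ) (hY : Measurable Y) (hε : Measurable ε) (hind : IndepFun Y ε P)
    (hYlaw : Measure.map Y P
      = volume.withDensity (fun y => ENNReal.ofReal (studentPdf ν 1 y)))
    (hεlaw : Measure.map ε P
      = volume.withDensity (fun e => ENNReal.ofReal (studentPdf ν σ e)))
    (X : Ω → ℝ) (hX : X = fun ω => α * Y ω + ε ω)
    (FX FY : ℝ → ℝ)
    (hFX : FX = fun x => (P {ω | X ω ≤ x}).toReal)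
    (hFY : FY = fun y => (P {ω | Y ω ≤ y}).toReal) :
    Tendsto
      (fun u : ℝ => (P {ω | X ω > quantile FX u ∧ Y ω > quantile FY u}).toReal /
        (P {ω | Y ω > quantile FY u}).toReal)
      (nhdsWithin 1 (Set.Iio 1)) (nhds (1 / (1 + (σ / α) ^ ν))) := by
  classical
  set l : Filter ℝ := 𝓝[<] (1:ℝ) with hl
  set c : ℝ := Cnu ν * ν ^ ((ν - 1) / 2) with hcdef
  have hc0 : 0 < c := mul_pos (Cnu_pos hν) (Real.rpow_pos_of_pos hν _)
  have hcE0 : 0 < c * σ ^ ν := mul_pos hc0 (Real.rpow_pos_of_pos hσ ν)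
  have hmX : Measurable X := by rw [hX]; exact (hY.const_mul α).add hε
  haveI hprobY : IsProbabilityMeasure (Measure.map Y P) :=
    Measure.isProbabilityMeasure_map hY.aemeasurable
  haveI hprobX : IsProbabilityMeasure (Measure.map X P) :=
    Measure.isProbabilityMeasure_map hmX.aemeasurable
  haveI hprobε : IsProbabilityMeasure (Measure.map ε P) :=
    Measure.isProbabilityMeasure_map hε.aemeasurable
  -- tail functions
  set TY : ℝ → ℝ := fun a => (P (Y ⁻¹' Ioi a)).toReal with hTYdef
  set Tε : ℝ → ℝ := fun a => (P (ε ⁻¹' Ioi a)).toReal with hTεdef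
  set TX : ℝ → ℝ := fun a => (P (X ⁻¹' Ioi a)).toReal with hTXdef
  have hTYmap : ∀ a, TY a = ((Measure.map Y P) (Ioi a)).toReal := by
    intro a; rw [hTYdef]; simp only; rw [Measure.map_apply hY measurableSet_Ioi]
  have hTεmap : ∀ a, Tε a = ((Measure.map ε P) (Ioi a)).toReal := by
    intro a; rw [hTεdef]; simp only; rw [Measure.map_apply hε measurableSet_Ioi]
  have hTXmap : ∀ a, TX a = ((Measure.map X P) (Ioi a)).toReal := by
    intro a; rw [hTXdef]; simp only; rw [Measure.map_apply hmX measurableSet_Ioi]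
  -- tail asymptotics from the Student law
  have hYtail : Tendsto (fun x => x ^ ν * TY x) atTop (𝓝 c) := by
    have h := student_tail hν one_pos
    rw [Real.one_rpow, mul_one] at h
    refine h.congr fun x => ?_
    rw [hTYmap x, hYlaw]
  have hεtail : Tendsto (fun x => x ^ ν * Tε x) atTop (𝓝 (c * σ ^ ν)) := by
    have h := student_tail hν hσ
    have : Cnu ν * ν ^ ((ν - 1) / 2) * σ ^ ν = c * σ ^ ν := by rw [hcdef]
    rw [this] at h
    refine h.congr fun x => ?_
    rw [hTεmap x, hεlaw]
  -- tails tend to 1 at -∞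
  have hY1 : Tendsto TY atBot (𝓝 1) := by
    refine (tail_tendsto_atBot (Measure.map Y P)).congr fun x => (hTYmap x).symm
  have hε1 : Tendsto Tε atBot (𝓝 1) := by
    refine (tail_tendsto_atBot (Measure.map ε P)).congr fun x => (hTεmap x).symm
  -- antitonicity and positivity
  have hTYanti : Antitone TY := fun a b hab =>
    toReal_mono_meas (preimage_mono (Ioi_subset_Ioi hab))
  have hTYpos : ∀ x, 0 < TY x := tail_pos hc0 hTYanti hYtail
  have hTεanti : Antitone Tε := fun a b hab =>
    toReal_mono_meas (preimage_mono (Ioi_subset_Ioi hab))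
  have hTεpos : ∀ x, 0 < Tε x := tail_pos hcE0 hTεanti hεtail
  -- tail of X
  have hXtail : Tendsto (fun x => x ^ ν * TX x) atTop (𝓝 (α ^ ν * c + c * σ ^ ν)) := by
    have h := sum_tail P hν hα hc0 hcE0 hY hε hind hYtail hεtail hY1 hε1
    refine h.congr fun x => ?_
    rw [hTXdef]; simp only [hX]
  set L : ℝ := α ^ ν * c + c * σ ^ ν with hLdef
  have hL0 : 0 < L := by
    have : 0 < α ^ ν * c := mul_pos (Real.rpow_pos_of_pos hα ν) hc0
    rw [hLdef]; linarith
  have hTXpos : ∀ x, 0 < TX x := by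
    intro x
    have hsub : (Y ⁻¹' Ioi (α⁻¹ * x) ∩ ε ⁻¹' Ioi 0) ⊆ X ⁻¹' Ioi x := by
      rintro ω ⟨h1, h2⟩
      simp only [mem_preimage, mem_Ioi, hX] at *
      have : x < α * Y ω := by
        have := mul_lt_mul_of_pos_left h1 hα
        calc x = α * (α⁻¹ * x) := by field_simp
          _ < α * Y ω := this
      linarith
    have hIprod : (P (Y ⁻¹' Ioi (α⁻¹ * x) ∩ ε ⁻¹' Ioi 0)).toReal = TY (α⁻¹ * x) * Tε 0 := by
      rw [hind.measure_inter_preimage_eq_mul _ _ measurableSet_Ioi measurableSet_Ioi,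
        ENNReal.toReal_mul]
    have := toReal_mono_meas (P := P) hsub
    rw [hIprod] at this
    exact lt_of_lt_of_le (mul_pos (hTYpos _) (hTεpos _)) this
  -- cdf identifications
  have hFYeq : FY = ⇑(cdf (Measure.map Y P)) := by
    rw [hFY]
    funext y
    rw [cdf_eq_real, measureReal_def, Measure.map_apply hY measurableSet_Iic]
    rfl
  have hFXeq : FX = ⇑(cdf (Measure.map X P)) := by
    rw [hFX]
    funext x
    rw [cdf_eq_real, measureReal_def, Measure.map_apply hmX measurableSet_Iic]
    rfl
  have hcdfY_lt1 : ∀ x, cdf (Measure.map Y P) x < 1 := by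
    intro x
    have h := tail_toReal_eq (Measure.map Y P) x
    rw [← hTYmap x] at h
    have := hTYpos x
    linarith
  have hcdfX_lt1 : ∀ x, cdf (Measure.map X P) x < 1 := by
    intro x
    have h := tail_toReal_eq (Measure.map X P) x
    rw [← hTXmap x] at h
    have := hTXpos x
    linarith
  -- quantile functions
  set s : ℝ → ℝ := fun u => quantile FY u with hsdef
  set t : ℝ → ℝ := fun u => quantile FX u with htdef
  have hsl : Tendsto s l atTop := by
    have := quantile_tendsto_atTop hcdfY_lt1
    refine this.congr fun u => ?_
    rw [hsdef]; simp only; rw [hFYeq]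
  have htl : Tendsto t l atTop := by
    have := quantile_tendsto_atTop hcdfX_lt1
    refine this.congr fun u => ?_
    rw [htdef]; simp only; rw [hFXeq]
  have hIoo : Ioo (0:ℝ) 1 ∈ l := Ioo_mem_nhdsLT_of_mem ⟨zero_lt_one, le_refl 1⟩
  have hqX : ∀ᶠ u in l, TX (t u) ≤ 1 - u ∧ 1 - u ≤ TX (t u - 1) := by
    filter_upwards [hIoo] with u hu
    have h := quantile_tail_bounds (μ := Measure.map X P) hu.1 hu.2
    rw [← hFXeq] at h
    exact ⟨by rw [hTXmap]; exact h.1, by rw [hTXmap]; exact h.2⟩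
  have hqY : ∀ᶠ u in l, TY (s u) ≤ 1 - u ∧ 1 - u ≤ TY (s u - 1) := by
    filter_upwards [hIoo] with u hu
    have h := quantile_tail_bounds (μ := Measure.map Y P) hu.1 hu.2
    rw [← hFYeq] at h
    exact ⟨by rw [hTYmap]; exact h.1, by rw [hTYmap]; exact h.2⟩
  -- sandwich limits for (1-u)
  have hTXm1 : Tendsto (fun u => t u ^ ν * TX (t u - 1)) l (𝓝 L) := by
    have h := tail_comp_lin hXtail htl (-1) one_pos
    rw [inv_one, Real.one_rpow, one_mul] at h
    refine h.congr fun u => ?_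
    rw [one_mul, ← sub_eq_add_neg]
  have hTX0 : Tendsto (fun u => t u ^ ν * TX (t u)) l (𝓝 L) := hXtail.comp htl
  have ht1u : Tendsto (fun u => t u ^ ν * (1 - u)) l (𝓝 L) := by
    refine tendsto_of_tendsto_of_tendsto_of_le_of_le' hTX0 hTXm1 ?_ ?_
    · filter_upwards [hqX, htl.eventually_gt_atTop 0] with u hu ht0
      exact mul_le_mul_of_nonneg_left hu.1 (Real.rpow_pos_of_pos ht0 ν).le
    · filter_upwards [hqX, htl.eventually_gt_atTop 0] with u hu ht0
      exact mul_le_mul_of_nonneg_left hu.2 (Real.rpow_pos_of_pos ht0 ν).le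
  have hTYm1 : Tendsto (fun u => s u ^ ν * TY (s u - 1)) l (𝓝 c) := by
    have h := tail_comp_lin hYtail hsl (-1) one_pos
    rw [inv_one, Real.one_rpow, one_mul] at h
    refine h.congr fun u => ?_
    rw [one_mul, ← sub_eq_add_neg]
  have hTY0 : Tendsto (fun u => s u ^ ν * TY (s u)) l (𝓝 c) := hYtail.comp hsl
  have hs1u : Tendsto (fun u => s u ^ ν * (1 - u)) l (𝓝 c) := by
    refine tendsto_of_tendsto_of_tendsto_of_le_of_le' hTY0 hTYm1 ?_ ?_
    · filter_upwards [hqY, hsl.eventually_gt_atTop 0] with u hu hs0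
      exact mul_le_mul_of_nonneg_left hu.1 (Real.rpow_pos_of_pos hs0 ν).le
    · filter_upwards [hqY, hsl.eventually_gt_atTop 0] with u hu hs0
      exact mul_le_mul_of_nonneg_left hu.2 (Real.rpow_pos_of_pos hs0 ν).le
  -- eventually α * s < t
  have hd : ∀ᶠ u in l, α * s u < t u := by
    have haux : Tendsto (fun u => (α * s u) ^ ν * (1 - u)) l (𝓝 (α ^ ν * c)) := by
      have h := hs1u.const_mul (α ^ ν)
      refine h.congr' ?_
      filter_upwards [hsl.eventually_gt_atTop 0] with u hs0
      rw [Real.mul_rpow hα.le hs0.le]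
      ring
    have hlt : α ^ ν * c < L := by
      rw [hLdef]
      have : 0 < c * σ ^ ν := hcE0
      linarith
    have hev := haux.eventually_lt ht1u hlt
    filter_upwards [hev, hsl.eventually_gt_atTop 0, htl.eventually_gt_atTop 0,
      eventually_mem_nhdsWithin.filter_mono (le_refl l)] with u h1 hs0 ht0 hu1
    have hu1' : u < 1 := hu1
    have h1u : 0 < 1 - u := by linarith
    have h2 : (α * s u) ^ ν < t u ^ ν := by
      by_contra hcon
      push_neg at hcon
      have := mul_le_mul_of_nonneg_right hcon h1u.le
      linarith
    exact (Real.rpow_lt_rpow_iff (by positivity) ht0.le hν).1 h2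
  -- numerator limit
  have hnum : Tendsto (fun u => t u ^ ν *
      (P ((fun ω => α * Y ω + ε ω) ⁻¹' Ioi (t u) ∩ Y ⁻¹' Ioi (s u))).toReal) l
      (𝓝 (α ^ ν * c)) :=
    joint_tail P hν hα hc0 hY hε hind hYtail hεtail hε1 hsl htl hd
  -- denominator limit
  have hTYratio : Tendsto (fun u => TY (s u) / (1 - u)) l (𝓝 1) := by
    have hlow : Tendsto (fun u => (s u ^ ν * TY (s u)) / (s u ^ ν * TY (s u - 1))) l
        (𝓝 (c / c)) := hTY0.div hTYm1 hc0.ne'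
    rw [div_self hc0.ne'] at hlow
    have hlow' : Tendsto (fun u => TY (s u) / TY (s u - 1)) l (𝓝 1) := by
      refine hlow.congr' ?_
      filter_upwards [hsl.eventually_gt_atTop 0] with u hs0
      rw [mul_div_mul_left _ _ (Real.rpow_pos_of_pos hs0 ν).ne']
    refine tendsto_of_tendsto_of_tendsto_of_le_of_le' hlow' tendsto_const_nhds ?_ ?_
    · filter_upwards [hqY, eventually_mem_nhdsWithin.filter_mono (le_refl l)] with u hu hu1
      have hu1' : (u:ℝ) < 1 := hu1
      have h1u : 0 < 1 - u := by linarith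
      have hTYm1pos : 0 < TY (s u - 1) := hTYpos _
      apply div_le_div_of_nonneg_left (hTYpos (s u)).le h1u hu.2
    · filter_upwards [hqY, eventually_mem_nhdsWithin.filter_mono (le_refl l)] with u hu hu1
      have hu1' : (u:ℝ) < 1 := hu1
      have h1u : 0 < 1 - u := by linarith
      exact div_le_one_of_le₀ hu.1 h1u.le
  have hden : Tendsto (fun u => t u ^ ν * TY (s u)) l (𝓝 L) := by
    have h := ht1u.mul hTYratio
    rw [mul_one] at h
    refine h.congr' ?_
    filter_upwards [eventually_mem_nhdsWithin.filter_mono (le_refl l)] with u hu1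
    have hu1' : (u:ℝ) < 1 := hu1
    have h1u : (1:ℝ) - u ≠ 0 := by linarith
    field_simp
  -- final combination
  have hfinal : Tendsto (fun u => (t u ^ ν *
      (P ((fun ω => α * Y ω + ε ω) ⁻¹' Ioi (t u) ∩ Y ⁻¹' Ioi (s u))).toReal)
      / (t u ^ ν * TY (s u))) l (𝓝 (α ^ ν * c / L)) :=
    hnum.div hden hL0.ne'
  have hconst : α ^ ν * c / L = 1 / (1 + (σ / α) ^ ν) := by
    rw [hLdef, Real.div_rpow hσ.le hα.le]
    have hαν : 0 < α ^ ν := Real.rpow_pos_of_pos hα ν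
    have hσν : 0 < σ ^ ν := Real.rpow_pos_of_pos hσ ν
    rw [div_eq_div_iff (by positivity) (by positivity)]
    field_simp
  rw [← hconst]
  refine hfinal.congr' ?_
  filter_upwards [htl.eventually_gt_atTop 0] with u ht0
  have htν : t u ^ ν ≠ 0 := (Real.rpow_pos_of_pos ht0 ν).ne'
  have hset1 : {ω | X ω > t u ∧ Y ω > s u}
      = (fun ω => α * Y ω + ε ω) ⁻¹' Ioi (t u) ∩ Y ⁻¹' Ioi (s u) := by
    rw [hX]; rfl
  have hset2 : {ω | Y ω > s u} = Y ⁻¹' Ioi (s u) := rfl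
  rw [mul_div_mul_left _ _ htν, hset1, hset2]
end

section
/- For ν > 0 and x₀ > 1, lim_{ε→0⁺} (1/ε)·∫_1^∞ x^{−ν}·C_ν·(1 + ((x−x₀)/ε)²/ν)^{−(ν+1)/2} dx = x₀^{−ν}, where C_ν = Γ((ν+1)/2)/(Γ(ν/2)√(νπ)). -/
open MeasureTheory Filter Real Set

lemma realBeta {a b : ℝ} (ha : 0 < a) (hb : 0 < b) :
    ∫ x in (0:ℝ)..1, x ^ (a - 1) * (1 - x) ^ (b - 1)
      = Real.Gamma a * Real.Gamma b / Real.Gamma (a + b) := by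
  have key := Complex.Gamma_mul_Gamma_eq_betaIntegral
      (s := (a : ℂ)) (t := (b : ℂ)) (by simpa using ha) (by simpa using hb)
  have hbeta : Complex.betaIntegral a b
      = ((∫ x in (0:ℝ)..1, x ^ (a - 1) * (1 - x) ^ (b - 1) : ℝ) : ℂ) := by
    rw [Complex.betaIntegral, ← intervalIntegral.integral_ofReal]
    refine intervalIntegral.integral_congr fun x hx => ?_
    rw [uIcc_of_le zero_le_one] at hx
    rw [Complex.ofReal_mul, Complex.ofReal_cpow hx.1,
      Complex.ofReal_cpow (by linarith [hx.2] : (0:ℝ) ≤ 1 - x)]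
    push_cast
    ring
  rw [hbeta, ← Complex.ofReal_add] at key
  rw [Complex.Gamma_ofReal, Complex.Gamma_ofReal, Complex.Gamma_ofReal] at key
  have : Real.Gamma a * Real.Gamma b
      = Real.Gamma (a + b) * ∫ x in (0:ℝ)..1, x ^ (a - 1) * (1 - x) ^ (b - 1) := by
    exact_mod_cast key
  rw [this]
  field_simp [Real.Gamma_pos_of_pos (by linarith : (0:ℝ) < a + b) |>.ne']

lemma betaIoi {a b : ℝ} (ha : 0 < a) (hb : 0 < b) :
    ∫ x in Set.Ioi (0:ℝ), x ^ (a - 1) * (1 + x) ^ (-(a + b))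
      = Real.Gamma a * Real.Gamma b / Real.Gamma (a + b) := by
  have himg : (fun x : ℝ => x / (1 - x)) '' Set.Ioo 0 1 = Set.Ioi (0:ℝ) := by
    ext u
    constructor
    · rintro ⟨x, ⟨hx0, hx1⟩, rfl⟩
      exact div_pos hx0 (by linarith)
    · intro hu
      have hu0 : (0:ℝ) < u := hu
      have hu1 : (0:ℝ) < 1 + u := by linarith
      refine ⟨u / (1 + u), ⟨div_pos hu0 hu1, by rw [div_lt_one hu1]; linarith⟩, ?_⟩
      show (u / (1 + u)) / (1 - u / (1 + u)) = u
      have h1 : 1 - u / (1 + u) = 1 / (1 + u) := by field_simp; ring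
      rw [h1]
      field_simp
  have hderiv : ∀ x ∈ Set.Ioo (0:ℝ) 1,
      HasDerivWithinAt (fun x : ℝ => x / (1 - x)) ((1 - x)⁻¹ ^ 2) (Set.Ioo 0 1) x := by
    intro x hx
    have h1x : 1 - x ≠ 0 := by have := hx.2; intro h; simp only [Set.mem_Ioo] at hx; linarith
    have := (hasDerivAt_id x).div ((hasDerivAt_id x).const_sub 1) h1x
    refine this.hasDerivWithinAt.congr_deriv ?_
    simp only [id]
    field_simp
    ring
  have hinj : Set.InjOn (fun x : ℝ => x / (1 - x)) (Set.Ioo 0 1) := by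
    intro x hx y hy h
    have h1x : 1 - x ≠ 0 := by have := hx.2; intro hc; linarith
    have h1y : 1 - y ≠ 0 := by have := hy.2; intro hc; linarith
    field_simp at h
    nlinarith [h]
  have key := integral_image_eq_integral_abs_deriv_smul measurableSet_Ioo hderiv hinj
      (fun x : ℝ => x ^ (a - 1) * (1 + x) ^ (-(a + b)))
  rw [himg] at key
  rw [key]
  have heq : ∀ x ∈ Set.Ioo (0:ℝ) 1,
      |(1 - x)⁻¹ ^ 2| • ((x / (1 - x)) ^ (a - 1) * (1 + x / (1 - x)) ^ (-(a + b)))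
        = x ^ (a - 1) * (1 - x) ^ (b - 1) := by
    intro x hx
    have hx0 := hx.1
    have h1x : (0:ℝ) < 1 - x := by have := hx.2; linarith
    have h2 : 1 + x / (1 - x) = (1 - x)⁻¹ := by field_simp; ring
    have e1 : |(1 - x)⁻¹ ^ 2| = (1 - x) ^ (-(2:ℝ)) := by
      rw [abs_of_nonneg (by positivity), ← Real.rpow_natCast (1-x)⁻¹ 2,
        ← Real.rpow_neg_one (1-x), ← Real.rpow_mul h1x.le]
      norm_num
    have e2 : (x / (1 - x)) ^ (a - 1) = x ^ (a-1) * (1-x) ^ (-(a-1)) := by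
      rw [Real.div_rpow hx0.le h1x.le, Real.rpow_neg h1x.le, div_eq_mul_inv]
    have e3 : (1 + x / (1 - x)) ^ (-(a + b)) = (1-x) ^ (a+b) := by
      rw [h2, ← Real.rpow_neg_one (1-x), ← Real.rpow_mul h1x.le]
      norm_num
    rw [smul_eq_mul, e1, e2, e3,
      show (1-x) ^ (-(2:ℝ)) * (x ^ (a-1) * (1-x) ^ (-(a-1)) * (1-x) ^ (a+b))
        = x ^ (a-1) * ((1-x) ^ (-(2:ℝ)) * (1-x) ^ (-(a-1)) * (1-x) ^ (a+b)) from by ring,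
      ← Real.rpow_add h1x, ← Real.rpow_add h1x]
    congr 1
    ring
  rw [setIntegral_congr_fun measurableSet_Ioo heq,
    ← MeasureTheory.integral_Ioc_eq_integral_Ioo,
    ← intervalIntegral.integral_of_le zero_le_one, realBeta ha hb]

lemma integrable_g {ν : ℝ} (hν : 0 < ν) :
    Integrable (fun t : ℝ => (1 + t ^ 2 / ν) ^ (-((ν + 1) / 2))) := by
  have h1 : Integrable (fun x : ℝ => (1 + ‖x‖ ^ 2) ^ (-(ν + 1) / 2)) :=
    integrable_rpow_neg_one_add_norm_sq (by simpa using by linarith : (Module.finrank ℝ ℝ : ℝ) < ν + 1)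
  have h2 := h1.comp_div (Real.sqrt_ne_zero'.mpr hν)
  refine h2.congr (Eventually.of_forall fun t => ?_)
  have h3 : ‖t / Real.sqrt ν‖ ^ 2 = t ^ 2 / ν := by
    rw [norm_eq_abs, sq_abs, div_pow, Real.sq_sqrt hν.le]
  show (1 + ‖t / Real.sqrt ν‖ ^ 2) ^ (-(ν + 1) / 2) = _
  rw [h3, neg_div]

lemma g_integral {ν : ℝ} (hν : 0 < ν) :
    ∫ t : ℝ, (1 + t ^ 2 / ν) ^ (-((ν + 1) / 2))
      = Real.sqrt (ν * π) * Real.Gamma (ν / 2) / Real.Gamma ((ν + 1) / 2) := by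
  set s : ℝ := (ν + 1) / 2 with hs
  -- step K = (1/2) L
  have hL := betaIoi (a := 1/2) (b := ν/2) (by norm_num) (by linarith)
  have hhalf : (1:ℝ)/2 + ν/2 = s := by rw [hs]; ring
  rw [hhalf] at hL
  have hK : (∫ u in Set.Ioi (0:ℝ), (1 + u ^ 2) ^ (-s))
      = (1/2) * ∫ x in Set.Ioi (0:ℝ), x ^ ((1:ℝ)/2 - 1) * (1 + x) ^ (-s) := by
    rw [← integral_comp_rpow_Ioi (fun u : ℝ => (1 + u ^ 2) ^ (-s)) (p := 1/2) (by norm_num),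
      ← integral_const_mul]
    refine setIntegral_congr_fun measurableSet_Ioi fun x hx => ?_
    have hx0 : (0:ℝ) < x := hx
    have : (x ^ ((1:ℝ)/2)) ^ 2 = x := by
      rw [← Real.rpow_natCast (x ^ ((1:ℝ)/2)) 2, ← Real.rpow_mul hx0.le]
      norm_num
    rw [smul_eq_mul, this, abs_of_pos (by norm_num : (0:ℝ) < 1/2)]
    ring
  -- step J = 2 K by evenness
  have hJ : (∫ t : ℝ, (1 + t ^ 2 / ν) ^ (-s))
      = Real.sqrt ν • ∫ u : ℝ, (1 + u ^ 2) ^ (-s) := by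
    have h := MeasureTheory.Measure.integral_comp_div
      (fun u : ℝ => (1 + u ^ 2) ^ (-s)) (Real.sqrt ν)
    rw [abs_of_pos (Real.sqrt_pos.mpr hν)] at h
    rw [← h]
    congr 1
    ext t
    rw [div_pow, Real.sq_sqrt hν.le]
  have hEven : (∫ u : ℝ, (1 + u ^ 2) ^ (-s))
      = 2 * ∫ u in Set.Ioi (0:ℝ), (1 + u ^ 2) ^ (-s) := by
    have := integral_comp_abs (f := fun r : ℝ => (1 + r ^ 2) ^ (-s))
    rw [← this]
    congr 1
    ext x
    rw [sq_abs]
  rw [hJ, hEven, hK, hL, Real.Gamma_one_half_eq, smul_eq_mul,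
    Real.sqrt_mul hν.le, hs]
  ring


theorem stmt18 (ν x₀ : ℝ) (hν : 0 < ν) (hx₀ : 1 < x₀) :
    Tendsto
      (fun ε : ℝ => (1 / ε) * ∫ x in Set.Ioi (1 : ℝ),
        x ^ (-ν) * (Cnu ν * (1 + ((x - x₀) / ε) ^ 2 / ν) ^ (-((ν + 1) / 2))))
      (nhdsWithin 0 (Set.Ioi 0)) (nhds (x₀ ^ (-ν))) := by
  have hx₀0 : (0:ℝ) < x₀ := by linarith
  set g : ℝ → ℝ := fun t => (1 + t ^ 2 / ν) ^ (-((ν + 1) / 2)) with hg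
  have hgpos : ∀ t, 0 < g t := fun t => Real.rpow_pos_of_pos (by positivity) _
  have hgcont : Continuous g := by
    apply Continuous.rpow_const (by fun_prop)
    intro t; left; positivity
  have hΓ1 : (0:ℝ) < Real.Gamma ((ν + 1) / 2) := Real.Gamma_pos_of_pos (by linarith)
  have hΓ2 : (0:ℝ) < Real.Gamma (ν / 2) := Real.Gamma_pos_of_pos (by linarith)
  have hsq : (0:ℝ) < Real.sqrt (ν * π) := Real.sqrt_pos.mpr (by positivity)
  have hC : 0 < Cnu ν := by rw [Cnu]; positivity
  have hCg : Cnu ν * ∫ t : ℝ, g t = 1 := by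
    rw [hg, g_integral hν, Cnu]
    field_simp
  set F : ℝ → ℝ → ℝ := fun ε t =>
    if 1 < x₀ + ε * t then (x₀ + ε * t) ^ (-ν) * (Cnu ν * g t) else 0 with hF
  have hcongr : ∀ᶠ ε in nhdsWithin (0:ℝ) (Set.Ioi 0),
      (1 / ε) * (∫ x in Set.Ioi (1:ℝ),
          x ^ (-ν) * (Cnu ν * (1 + ((x - x₀) / ε) ^ 2 / ν) ^ (-((ν + 1) / 2))))
        = ∫ t : ℝ, F ε t := by
    filter_upwards [self_mem_nhdsWithin] with ε (hε : (0:ℝ) < ε)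
    set f : ℝ → ℝ := fun x => x ^ (-ν) * (Cnu ν * g ((x - x₀) / ε)) with hf
    have h1 : (∫ x in Set.Ioi (1:ℝ),
        x ^ (-ν) * (Cnu ν * (1 + ((x - x₀) / ε) ^ 2 / ν) ^ (-((ν + 1) / 2))))
        = ∫ x : ℝ, (Set.Ioi (1:ℝ)).indicator f x := by
      rw [integral_indicator measurableSet_Ioi]
    have h2 : (∫ x : ℝ, (Set.Ioi (1:ℝ)).indicator f x)
        = ∫ x : ℝ, (Set.Ioi (1:ℝ)).indicator f (x + x₀) :=
      (integral_add_right_eq_self _ x₀).symm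
    have h3 := MeasureTheory.Measure.integral_comp_mul_left
      (fun x : ℝ => (Set.Ioi (1:ℝ)).indicator f (x + x₀)) ε
    have h4 : (∫ t : ℝ, F ε t) = ∫ x : ℝ, (Set.Ioi (1:ℝ)).indicator f (ε * x + x₀) := by
      congr 1
      ext t
      rw [Set.indicator_apply, hF]
      simp only [Set.mem_Ioi]
      rw [show ε * t + x₀ = x₀ + ε * t from by ring]
      by_cases h : 1 < x₀ + ε * t
      · rw [if_pos h, if_pos h, hf]
        have h5 : (x₀ + ε * t - x₀) / ε = t := by field_simp; ring
        simp only [h5]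
      · rw [if_neg h, if_neg h]
    rw [h1, h2, h4, h3, abs_of_pos (by positivity : (0:ℝ) < ε⁻¹), smul_eq_mul, one_div]
  have hmain : Tendsto (fun ε : ℝ => ∫ t : ℝ, F ε t) (nhdsWithin 0 (Set.Ioi 0))
      (nhds (∫ t : ℝ, x₀ ^ (-ν) * (Cnu ν * g t))) := by
    apply tendsto_integral_filter_of_dominated_convergence (bound := fun t => Cnu ν * g t)
    · filter_upwards [self_mem_nhdsWithin] with ε (hε : (0:ℝ) < ε)
      apply Measurable.aestronglyMeasurable
      apply Measurable.ite
      · exact measurableSet_lt measurable_const (by fun_prop)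
      · exact ((by fun_prop : Measurable fun t : ℝ => (x₀ + ε * t) ^ (-ν))).mul
          (hgcont.measurable.const_mul _)
      · exact measurable_const
    · filter_upwards [self_mem_nhdsWithin] with ε (hε : (0:ℝ) < ε)
      refine Eventually.of_forall fun t => ?_
      rw [hF]
      by_cases h : 1 < x₀ + ε * t
      · simp only [if_pos h]
        rw [norm_eq_abs, abs_of_nonneg (by positivity)]
        have h2 : (x₀ + ε * t) ^ (-ν) ≤ 1 :=
          Real.rpow_le_one_of_one_le_of_nonpos h.le (by linarith)
        calc (x₀ + ε * t) ^ (-ν) * (Cnu ν * g t) ≤ 1 * (Cnu ν * g t) := by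
              apply mul_le_mul_of_nonneg_right h2 (by positivity)
          _ = Cnu ν * g t := one_mul _
      · simp only [if_neg h]
        rw [norm_zero]
        positivity
    · exact (integrable_g hν).const_mul _
    · refine Eventually.of_forall fun t => ?_
      have hev : ∀ᶠ ε in nhdsWithin (0:ℝ) (Set.Ioi 0),
          F ε t = (x₀ + ε * t) ^ (-ν) * (Cnu ν * g t) := by
        have hc : Tendsto (fun ε : ℝ => x₀ + ε * t) (nhds 0) (nhds x₀) := by
          have : Continuous (fun ε : ℝ => x₀ + ε * t) := by fun_prop
          simpa using this.tendsto 0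
        have h4 : ∀ᶠ ε in nhds (0:ℝ), 1 < x₀ + ε * t := hc.eventually (lt_mem_nhds hx₀)
        filter_upwards [nhdsWithin_le_nhds h4] with ε h5
        rw [hF]; simp only [if_pos h5]
      have hc2 : Tendsto (fun ε : ℝ => (x₀ + ε * t) ^ (-ν) * (Cnu ν * g t))
          (nhdsWithin 0 (Set.Ioi 0)) (nhds (x₀ ^ (-ν) * (Cnu ν * g t))) := by
        apply Tendsto.mul_const
        have hc : Tendsto (fun ε : ℝ => x₀ + ε * t) (nhdsWithin 0 (Set.Ioi 0)) (nhds x₀) := by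
          have : Continuous (fun ε : ℝ => x₀ + ε * t) := by fun_prop
          have := this.tendsto 0
          simp only [zero_mul, add_zero] at this
          exact this.mono_left nhdsWithin_le_nhds
        exact ((Real.continuousAt_rpow_const x₀ (-ν) (Or.inl hx₀0.ne')).tendsto).comp hc
      exact hc2.congr' (hev.mono fun ε h => h.symm)
  have hval : (∫ t : ℝ, x₀ ^ (-ν) * (Cnu ν * g t)) = x₀ ^ (-ν) := by
    rw [integral_const_mul, integral_const_mul, hCg, mul_one]
  rw [hval] at hmain
  exact hmain.congr' (hcongr.mono fun ε h => h.symm)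
end
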